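/- arXiv:2209.13776 — 3 statements merged into one kernel-verified Lean document; each statement's English description precedes it below -/
import Mathlib

section
/- Let G be the join K_1 ∨ (P_{ℓ₁} ∪ ⋯ ∪ P_{ℓ_r}) with center vertex u, let λ be an eigenvalue of the adjacency matrix A(G) with |λ| ≥ 2, and let α be an eigenvector for λ normalized so that α(u) = 1. Then for any path component P_ℓ of G − u with adjacency matrix A_ℓ, the restriction x of α to the vertices of P_ℓ satisfies x = Σ_{k=0}^∞ λ^{-(k+1)} A_ℓ^k 𝟏. -/
open SimpleGraph Matrix

/-- Disjoint union of paths `P_{L 0}, …, P_{L (r-1)}`. -/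
def pathsUnion (r : ℕ) (L : Fin r → ℕ) : SimpleGraph (Σ i, Fin (L i)) where
  Adj x y := x.1 = y.1 ∧ ((x.2 : ℕ) + 1 = (y.2 : ℕ) ∨ (y.2 : ℕ) + 1 = (x.2 : ℕ))
  symm := ⟨by rintro x y ⟨h1, h2⟩; exact ⟨h1.symm, h2.symm⟩⟩
  loopless := ⟨by rintro x ⟨-, h | h⟩ <;> omega⟩

/-- Join of a graph with one new vertex (`K₁ ∨ F`), center `none`. -/
def cone {V : Type*} (F : SimpleGraph V) : SimpleGraph (Option V) where
  Adj x y := match x, y with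
    | none, none => False
    | none, some _ => True
    | some _, none => True
    | some a, some b => F.Adj a b
  symm := ⟨by rintro (_ | a) (_ | b) h <;> simp_all <;> exact h.symm⟩
  loopless := ⟨by rintro (_ | a) h <;> simp_all⟩

/-- Join of two graphs. -/
def gJoin {α β : Type*} (G : SimpleGraph α) (H : SimpleGraph β) : SimpleGraph (α ⊕ β) where
  Adj x y := match x, y with
    | .inl a, .inl b => G.Adj a b
    | .inr a, .inr b => H.Adj a b
    | _, _ => True
  symm := ⟨by rintro (a | a) (b | b) h <;> simp_all <;> exact h.symm⟩
  loopless := ⟨by rintro (a | a) h <;> simp_all⟩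

/-- Cycle graph on `m` vertices. -/
def cycleG (m : ℕ) : SimpleGraph (Fin m) where
  Adj x y := x ≠ y ∧ (((x : ℕ) + 1) % m = (y : ℕ) ∨ ((y : ℕ) + 1) % m = (x : ℕ))
  symm := ⟨by rintro x y ⟨h1, h2⟩; exact ⟨h1.symm, h2.symm⟩⟩
  loopless := ⟨by rintro x ⟨h, -⟩; exact h rfl⟩

/-- Real adjacency matrix of a graph. -/
noncomputable def adjMat {V : Type*} (G : SimpleGraph V) : Matrix V V ℝ :=
  letI := Classical.decRel G.Adj
  G.adjMatrix ℝ

/-- Largest adjacency eigenvalue. -/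
noncomputable def maxEig {V : Type*} [Fintype V] [DecidableEq V] (G : SimpleGraph V) : ℝ :=
  sSup (spectrum ℝ (adjMat G))

/-- Smallest adjacency eigenvalue. -/
noncomputable def minEig {V : Type*} [Fintype V] [DecidableEq V] (G : SimpleGraph V) : ℝ :=
  sInf (spectrum ℝ (adjMat G))

/-- Spread of a graph. -/
noncomputable def gspread {V : Type*} [Fintype V] [DecidableEq V] (G : SimpleGraph V) : ℝ :=
  maxEig G - minEig G

/-- Adjacency matrix of the path on `m` vertices. -/
def pathMatrix (m : ℕ) : Matrix (Fin m) (Fin m) ℝ :=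
  Matrix.of fun a b => if (a : ℕ) + 1 = (b : ℕ) ∨ (b : ℕ) + 1 = (a : ℕ) then 1 else 0

/-- `H` is a minor of `G`. -/
def HasMinor {V W : Type*} (G : SimpleGraph V) (H : SimpleGraph W) : Prop :=
  ∃ B : W → Set V, (∀ w, (B w).Nonempty) ∧ (Pairwise fun a b => Disjoint (B a) (B b)) ∧
    (∀ w, (G.induce (B w)).Connected) ∧
    (∀ ⦃a b⦄, H.Adj a b → ∃ u ∈ B a, ∃ v ∈ B b, G.Adj u v)

/-- Planarity via Wagner's theorem: no `K₅` and no `K_{3,3}` minor. -/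
def IsPlanar {V : Type*} (G : SimpleGraph V) : Prop :=
  ¬ HasMinor G (⊤ : SimpleGraph (Fin 5)) ∧
  ¬ HasMinor G (completeBipartiteGraph (Fin 3) (Fin 3))

/-- Outerplanarity: no `K₄` and no `K_{2,3}` minor. -/
def IsOuterplanar {V : Type*} (G : SimpleGraph V) : Prop :=
  ¬ HasMinor G (⊤ : SimpleGraph (Fin 4)) ∧
  ¬ HasMinor G (completeBipartiteGraph (Fin 2) (Fin 3))

section Helpers

open Finset

private noncomputable def vext {m : ℕ} (v : Fin m → ℝ) (c : ℕ) : ℝ :=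
  if h : c < m then v ⟨c, h⟩ else 0

private lemma sum_ite_coe {m : ℕ} (v : Fin m → ℝ) (c : ℕ) :
    (∑ k : Fin m, if (k : ℕ) = c then v k else 0) = vext v c := by
  unfold vext
  split_ifs with h
  · rw [Finset.sum_eq_single ⟨c, h⟩]
    · simp
    · intro b _ hb
      rw [if_neg]
      intro hc
      exact hb (Fin.ext hc)
    · simp
  · apply Finset.sum_eq_zero
    intro k _
    rw [if_neg]
    intro hc
    exact h (hc ▸ k.2)

private lemma pathMatrix_mulVec {m : ℕ} (v : Fin m → ℝ) (j : Fin m) :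
    (pathMatrix m).mulVec v j =
      vext v ((j : ℕ) + 1) + (if 0 < (j : ℕ) then vext v ((j : ℕ) - 1) else 0) := by
  have key : ∀ k : Fin m,
      (if (j : ℕ) + 1 = (k : ℕ) ∨ (k : ℕ) + 1 = (j : ℕ) then (1:ℝ) else 0) * v k
      = (if (k : ℕ) = (j : ℕ) + 1 then v k else 0)
        + (if 0 < (j : ℕ) then (if (k : ℕ) = (j : ℕ) - 1 then v k else 0) else 0) := by
    intro k
    split_ifs <;> simp_all <;> omega
  simp only [Matrix.mulVec, dotProduct, pathMatrix, Matrix.of_apply]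
  rw [Finset.sum_congr rfl (fun k _ => key k), Finset.sum_add_distrib, sum_ite_coe]
  congr 1
  split_ifs with hj
  · simp only [if_pos hj] at *
    exact sum_ite_coe v _
  · simp

private lemma pathMatrix_eig_lt {m : ℕ} (μ : ℝ) (v : Fin m → ℝ) (hv : v ≠ 0)
    (h : (pathMatrix m).mulVec v = μ • v) : |μ| < 2 := by
  by_contra hc
  push_neg at hc
  obtain ⟨j₁, hj₁⟩ := Function.ne_iff.1 hv
  have hne : (univ : Finset (Fin m)).Nonempty := ⟨j₁, mem_univ _⟩
  set M : ℝ := univ.sup' hne (fun j => |v j|) with hM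
  have hle : ∀ j : Fin m, |v j| ≤ M := fun j => Finset.le_sup' (fun j => |v j|) (mem_univ j)
  have hM0 : 0 < M := lt_of_lt_of_le (abs_pos.2 hj₁) (hle j₁)
  have hvb : ∀ c : ℕ, |vext v c| ≤ M := by
    intro c; unfold vext; split_ifs with h'
    · exact hle _
    · simpa using hM0.le
  have step : ∀ j : Fin m, |v j| = M →
      ∃ _ : 0 < (j : ℕ), |v ⟨(j : ℕ) - 1, Nat.lt_of_le_of_lt (Nat.sub_le _ _) j.2⟩| = M := by
    intro j hj
    have hrow := congrFun h j
    rw [pathMatrix_mulVec] at hrow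
    simp only [Pi.smul_apply, smul_eq_mul] at hrow
    have h2 : 2 * M ≤ |μ * v j| := by
      rw [abs_mul, hj]
      exact mul_le_mul_of_nonneg_right hc hM0.le
    rw [← hrow] at h2
    have h3 : |vext v ((j : ℕ) + 1) + (if 0 < (j : ℕ) then vext v ((j : ℕ) - 1) else 0)|
        ≤ M + |(if 0 < (j : ℕ) then vext v ((j : ℕ) - 1) else 0)| :=
      (abs_add_le _ _).trans (by gcongr; exact hvb _)
    have h4 : M ≤ |(if 0 < (j : ℕ) then vext v ((j : ℕ) - 1) else 0)| := by linarith
    by_cases hj0 : 0 < (j : ℕ)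
    · refine ⟨hj0, ?_⟩
      rw [if_pos hj0] at h4
      have h5 : vext v ((j : ℕ) - 1)
          = v ⟨(j : ℕ) - 1, Nat.lt_of_le_of_lt (Nat.sub_le _ _) j.2⟩ := by
        unfold vext; rw [dif_pos]
      rw [h5] at h4
      exact le_antisymm (hle _) h4
    · rw [if_neg hj0] at h4
      simp at h4
      linarith
  have hnone : ∀ n : ℕ, ∀ j : Fin m, (j : ℕ) = n → |v j| ≠ M := by
    intro n
    induction n with
    | zero => intro j hjn hMj; obtain ⟨hpos, -⟩ := step j hMj; omega
    | succ n ih =>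
      intro j hjn hMj
      obtain ⟨hpos, hpre⟩ := step j hMj
      exact ih _ (by simp; omega) hpre
  obtain ⟨j₀, -, hj₀⟩ := Finset.exists_mem_eq_sup' hne (fun j => |v j|)
  exact hnone (j₀ : ℕ) j₀ rfl hj₀.symm

private lemma pathMatrix_isHermitian (m : ℕ) : (pathMatrix m).IsHermitian := by
  ext i j
  simp only [pathMatrix, Matrix.conjTranspose_apply, Matrix.of_apply, star_trivial]
  exact if_congr or_comm rfl rfl

private lemma pathMatrix_pow_bound {m : ℕ} (hm : 0 < m) :
    ∃ ρ : ℝ, 0 ≤ ρ ∧ ρ < 2 ∧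
      ∀ (k : ℕ) (i j : Fin m), |(pathMatrix m ^ k) i j| ≤ m * ρ ^ k := by
  have : NeZero m := ⟨hm.ne'⟩
  have hA := pathMatrix_isHermitian m
  have hne : (univ : Finset (Fin m)).Nonempty := univ_nonempty
  set U : Matrix (Fin m) (Fin m) ℝ := (hA.eigenvectorUnitary : Matrix (Fin m) (Fin m) ℝ) with hU
  set μ : Fin m → ℝ := hA.eigenvalues with hμ
  refine ⟨univ.sup' hne (fun i => |μ i|), ?_, ?_, ?_⟩
  · exact le_trans (abs_nonneg _) (Finset.le_sup' (fun i => |μ i|) (mem_univ ⟨0, hm⟩))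
  · rw [Finset.sup'_lt_iff]
    intro i _
    apply pathMatrix_eig_lt (μ i) _ _ (hA.mulVec_eigenvectorBasis i)
    intro h0
    exact hA.eigenvectorBasis.orthonormal.ne_zero i (by ext t; exact congrFun h0 t)
  · set ρ := univ.sup' hne (fun i => |μ i|) with hρ
    have hρle : ∀ i, |μ i| ≤ ρ := fun i => Finset.le_sup' (fun i => |μ i|) (mem_univ i)
    have hρ0 : 0 ≤ ρ := le_trans (abs_nonneg _) (hρle ⟨0, hm⟩)
    have hUub : ∀ i j, |U i j| ≤ 1 := by
      intro i j
      have h1 : star U * U = 1 := Matrix.mem_unitaryGroup_iff'.mp hA.eigenvectorUnitary.2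
      have h2 := congrFun (congrFun h1 j) j
      simp only [Matrix.mul_apply, Matrix.conjTranspose_apply, star_trivial,
        Matrix.one_apply_eq] at h2
      have h3 : U i j * U i j ≤ 1 := by
        rw [← h2]
        exact Finset.single_le_sum (f := fun t => U t j * U t j)
          (fun t _ => mul_self_nonneg _) (mem_univ i)
      rw [abs_le_one_iff_mul_self_le_one]
      exact h3
    have hpow : ∀ k : ℕ, pathMatrix m ^ k = U * Matrix.diagonal (fun t => μ t ^ k) * star U := by
      intro k
      induction k with
      | zero =>
        simp only [pow_zero]
        rw [show (Matrix.diagonal fun _ : Fin m => (1:ℝ)) = 1 from Matrix.diagonal_one, mul_one]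
        exact (Matrix.mem_unitaryGroup_iff.mp hA.eigenvectorUnitary.2).symm
      | succ k ih =>
        have hspec : pathMatrix m = U * Matrix.diagonal μ * star U := by
          have := hA.spectral_theorem
          simpa using this
        have hUU : star U * U = 1 := Matrix.mem_unitaryGroup_iff'.mp hA.eigenvectorUnitary.2
        have key : ∀ D E : Matrix (Fin m) (Fin m) ℝ,
            (U * D * star U) * (U * E * star U) = U * (D * E) * star U := by
          intro D E
          simp only [Matrix.mul_assoc]
          rw [← Matrix.mul_assoc (star U) U (E * star U), hUU, Matrix.one_mul]
        rw [pow_succ, ih, hspec, key, Matrix.diagonal_mul_diagonal]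
        have hfun : (fun i => μ i ^ k * μ i) = fun t => μ t ^ (k + 1) := by
          ext t; simp [pow_succ]
        rw [hfun]
    intro k i j
    rw [hpow k]
    have hentry : (U * Matrix.diagonal (fun t => μ t ^ k) * star U) i j
        = ∑ t, U i t * μ t ^ k * U j t := by
      rw [Matrix.mul_apply]
      apply Finset.sum_congr rfl
      intro t _
      rw [Matrix.mul_diagonal, Matrix.star_apply, star_trivial]
    rw [hentry]
    calc |∑ t, U i t * μ t ^ k * U j t| ≤ ∑ t, |U i t * μ t ^ k * U j t| :=
          Finset.abs_sum_le_sum_abs _ _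
      _ ≤ ∑ _t : Fin m, ρ ^ k := by
          apply Finset.sum_le_sum
          intro t _
          rw [abs_mul, abs_mul]
          calc |U i t| * |μ t ^ k| * |U j t| ≤ 1 * ρ ^ k * 1 := by
                apply mul_le_mul (mul_le_mul (hUub i t) ?_ (abs_nonneg _) zero_le_one)
                  (hUub j t) (abs_nonneg _) (by positivity)
                rw [abs_pow]
                exact pow_le_pow_left₀ (abs_nonneg _) (hρle t) k
            _ = ρ ^ k := by ring
      _ = m * ρ ^ k := by simp [Finset.sum_const, nsmul_eq_mul]

end Helpers

theorem stmt_0 (r : ℕ) (L : Fin r → ℕ) (lam : ℝ) (hlam : 2 ≤ |lam|)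
    (α : Option (Σ i, Fin (L i)) → ℝ)
    (heig : (adjMat (cone (pathsUnion r L))).mulVec α = lam • α)
    (hu : α none = 1) (i₀ : Fin r) :
    (fun j : Fin (L i₀) => α (some ⟨i₀, j⟩)) =
      ∑' k : ℕ, (lam ^ (k + 1))⁻¹ • (pathMatrix (L i₀) ^ k).mulVec (fun _ => 1) := by
  classical
  rcases Nat.eq_zero_or_pos (L i₀) with hm0 | hm
  · funext j
    exact absurd j.2 (by omega)
  set m := L i₀ with hmdef
  set x : Fin m → ℝ := fun j => α (some ⟨i₀, j⟩) with hxdef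
  set A := pathMatrix m with hAdef
  -- Step 1: the eigenvector equation restricted to the path component
  have hxeq : lam • x = A.mulVec x + fun _ => 1 := by
    funext j
    have h := congrFun heig (some ⟨i₀, j⟩)
    simp only [Pi.smul_apply, smul_eq_mul] at h
    have hentry : ∀ z w, adjMat (cone (pathsUnion r L)) z w
        = if (cone (pathsUnion r L)).Adj z w then 1 else 0 := by
      intro z w
      unfold adjMat
      rw [SimpleGraph.adjMatrix_apply]
    rw [Matrix.mulVec, dotProduct, Fintype.sum_option] at h
    have hnone : adjMat (cone (pathsUnion r L)) (some ⟨i₀, j⟩) none * α none = 1 := by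
      rw [hentry, hu, if_pos]
      · ring
      · trivial
    have hsig : (∑ b : Σ i, Fin (L i),
        adjMat (cone (pathsUnion r L)) (some ⟨i₀, j⟩) (some b) * α (some b))
        = A.mulVec x j := by
      rw [← Finset.univ_sigma_univ, Finset.sum_sigma]
      rw [Finset.sum_eq_single i₀]
      · rw [Matrix.mulVec, dotProduct]
        apply Finset.sum_congr rfl
        intro k _
        rw [hentry]
        simp only [hAdef, pathMatrix, Matrix.of_apply]
        have hadj : (cone (pathsUnion r L)).Adj (some ⟨i₀, j⟩) (some ⟨i₀, k⟩)
            ↔ ((j : ℕ) + 1 = (k : ℕ) ∨ (k : ℕ) + 1 = (j : ℕ)) := by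
          show (pathsUnion r L).Adj ⟨i₀, j⟩ ⟨i₀, k⟩ ↔ _
          show (i₀ = i₀ ∧ _) ↔ _
          simp
        by_cases hc : (j : ℕ) + 1 = (k : ℕ) ∨ (k : ℕ) + 1 = (j : ℕ)
        · rw [if_pos (hadj.2 hc), if_pos hc]
        · rw [if_neg (fun hh => hc (hadj.1 hh)), if_neg hc]
      · intro i _ hi
        apply Finset.sum_eq_zero
        intro k _
        rw [hentry, if_neg, zero_mul]
        intro hadj
        have : i₀ = i := hadj.1
        exact hi this.symm
      · simp
    rw [hnone, hsig] at h
    simp only [Pi.smul_apply, smul_eq_mul, Pi.add_apply]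
    linarith
  have hlam2 : (0:ℝ) < |lam| := by linarith
  have hlam0 : lam ≠ 0 := fun h0 => by simp [h0] at hlam2
  obtain ⟨ρ, hρ0, hρ2, hbound⟩ := pathMatrix_pow_bound hm
  set f : ℕ → (Fin m → ℝ) :=
    fun k => (lam ^ (k + 1))⁻¹ • (A ^ k).mulVec (fun _ => 1) with hfdef
  -- norm bound on powers applied to vectors
  have hmv : ∀ (k : ℕ) (y : Fin m → ℝ),
      ‖(A ^ k).mulVec y‖ ≤ (m : ℝ) ^ 2 * ρ ^ k * ‖y‖ := by
    intro k y
    rw [pi_norm_le_iff_of_nonneg (by positivity)]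
    intro i
    rw [Matrix.mulVec, dotProduct, Real.norm_eq_abs]
    calc |∑ t, (A ^ k) i t * y t| ≤ ∑ t, |(A ^ k) i t * y t| :=
          Finset.abs_sum_le_sum_abs _ _
      _ ≤ ∑ _t : Fin m, (m : ℝ) * ρ ^ k * ‖y‖ := by
          apply Finset.sum_le_sum
          intro t _
          rw [abs_mul]
          have h1 := hbound k i t
          have h2 : |y t| ≤ ‖y‖ := by
            have := norm_le_pi_norm y t
            rwa [Real.norm_eq_abs] at this
          have hym : (0:ℝ) ≤ ‖y‖ := norm_nonneg _
          calc |(A ^ k) i t| * |y t| ≤ ((m : ℝ) * ρ ^ k) * ‖y‖ := by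
                apply mul_le_mul h1 h2 (abs_nonneg _)
                positivity
            _ = (m : ℝ) * ρ ^ k * ‖y‖ := rfl
      _ = (m : ℝ) ^ 2 * ρ ^ k * ‖y‖ := by
          rw [Finset.sum_const, Finset.card_univ, Fintype.card_fin, nsmul_eq_mul]
          ring
  have hlampow : ∀ k : ℕ, |lam ^ k|⁻¹ ≤ ((2:ℝ) ^ k)⁻¹ := by
    intro k
    apply inv_anti₀ (by positivity)
    rw [abs_pow]
    exact pow_le_pow_left₀ (by norm_num) hlam k
  have hone : ‖(fun _ : Fin m => (1:ℝ))‖ ≤ 1 := by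
    rw [pi_norm_le_iff_of_nonneg zero_le_one]
    intro i
    simp
  have hhalf : (0:ℝ) ≤ ρ / 2 := by linarith
  have hhalf1 : ρ / 2 < 1 := by linarith
  -- summability
  have hfb : ∀ k, ‖f k‖ ≤ ((m : ℝ) ^ 2 / 2) * (ρ / 2) ^ k := by
    intro k
    rw [hfdef]
    simp only
    rw [norm_smul, Real.norm_eq_abs, abs_inv]
    calc |lam ^ (k+1)|⁻¹ * ‖(A ^ k).mulVec (fun _ => 1)‖
        ≤ ((2:ℝ) ^ (k+1))⁻¹ * ((m : ℝ) ^ 2 * ρ ^ k * 1) := by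
          apply mul_le_mul (hlampow (k+1)) ?_ (norm_nonneg _) (by positivity)
          calc ‖(A ^ k).mulVec (fun _ => 1)‖ ≤ (m : ℝ) ^ 2 * ρ ^ k * ‖(fun _ : Fin m => (1:ℝ))‖ :=
                hmv k _
            _ ≤ (m : ℝ) ^ 2 * ρ ^ k * 1 := by
                apply mul_le_mul_of_nonneg_left hone
                positivity
      _ = ((m : ℝ) ^ 2 / 2) * (ρ / 2) ^ k := by
          rw [div_pow]
          ring
  have hsummable : Summable f := by
    apply Summable.of_norm_bounded (Summable.mul_left _ (summable_geometric_of_lt_one hhalf hhalf1)) hfb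
  -- partial sum identity
  have hxiter : ∀ N : ℕ,
      (∑ k ∈ Finset.range N, f k) + (lam ^ N)⁻¹ • (A ^ N).mulVec x = x := by
    intro N
    induction N with
    | zero => simp [Matrix.one_mulVec]
    | succ N ih =>
      rw [Finset.sum_range_succ]
      have h1 : lam • ((A ^ N).mulVec x) = (A ^ (N+1)).mulVec x + (A ^ N).mulVec (fun _ => 1) := by
        rw [← Matrix.mulVec_smul, hxeq, Matrix.mulVec_add, Matrix.mulVec_mulVec, ← pow_succ]
      have h2 : (lam ^ N)⁻¹ • ((A ^ N).mulVec x)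
          = (lam ^ (N+1))⁻¹ • (lam • ((A ^ N).mulVec x)) := by
        rw [smul_smul]
        congr 1
        rw [pow_succ]
        field_simp
      rw [h2, h1, smul_add] at ih
      have hfN : f N = (lam ^ (N+1))⁻¹ • (A ^ N).mulVec (fun _ => 1) := rfl
      rw [hfN]
      conv_rhs => rw [← ih]
      module
  -- remainder tends to zero
  have hrem : Filter.Tendsto (fun N => (lam ^ N)⁻¹ • (A ^ N).mulVec x)
      Filter.atTop (nhds 0) := by
    apply squeeze_zero_norm (a := fun N => ((m : ℝ) ^ 2 * ‖x‖) * (ρ / 2) ^ N)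
    · intro N
      rw [norm_smul, Real.norm_eq_abs, abs_inv]
      calc |lam ^ N|⁻¹ * ‖(A ^ N).mulVec x‖
          ≤ ((2:ℝ) ^ N)⁻¹ * ((m : ℝ) ^ 2 * ρ ^ N * ‖x‖) :=
            mul_le_mul (hlampow N) (hmv N x) (norm_nonneg _) (by positivity)
        _ = ((m : ℝ) ^ 2 * ‖x‖) * (ρ / 2) ^ N := by
            rw [div_pow]
            field_simp
    · simpa using (tendsto_pow_atTop_nhds_zero_of_lt_one hhalf hhalf1).const_mul
        ((m : ℝ) ^ 2 * ‖x‖)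
  have hps : Filter.Tendsto (fun N => ∑ k ∈ Finset.range N, f k) Filter.atTop (nhds x) := by
    have heq : (fun N => ∑ k ∈ Finset.range N, f k)
        = fun N => x - (lam ^ N)⁻¹ • (A ^ N).mulVec x := by
      funext N
      exact eq_sub_of_add_eq (hxiter N)
    rw [heq]
    simpa using tendsto_const_nhds.sub hrem
  have := tendsto_nhds_unique hsummable.hasSum.tendsto_sum_nat hps
  exact this.symm
end

section
/- Let G = K_1 ∨ (P_{ℓ₁} ∪ ⋯ ∪ P_{ℓ_r}) with center vertex u, and let λ ≥ 2 be an eigenvalue of A(G) with eigenvector α normalized so that α(u) = 1. Then all entries of α are positive. -/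
open SimpleGraph Matrix

theorem stmt_1 (r : ℕ) (L : Fin r → ℕ) (lam : ℝ) (hlam : 2 ≤ lam)
    (α : Option (Σ i, Fin (L i)) → ℝ)
    (heig : (adjMat (cone (pathsUnion r L))).mulVec α = lam • α)
    (hu : α none = 1) :
    ∀ v, 0 < α v := by
  classical
  have key : ∀ x : Σ i, Fin (L i),
      1 + ∑ y : Σ i, Fin (L i), (if (pathsUnion r L).Adj x y then α (some y) else 0)
        = lam * α (some x) := by
    intro x
    have h := congrFun heig (some x)
    simp only [adjMat, Matrix.mulVec, dotProduct, Fintype.sum_option,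
      SimpleGraph.adjMatrix_apply, Pi.smul_apply, smul_eq_mul, ite_mul, one_mul, zero_mul] at h
    have hadj1 : (cone (pathsUnion r L)).Adj (some x) none := trivial
    have hadj2 : ∀ y, (cone (pathsUnion r L)).Adj (some x) (some y) ↔ (pathsUnion r L).Adj x y :=
      fun y => Iff.rfl
    rw [if_pos hadj1, hu] at h
    simp only [hadj2] at h
    simpa using h
  have card_le : ∀ x : Σ i, Fin (L i),
      (Finset.univ.filter fun y => (pathsUnion r L).Adj x y).card ≤ 2 := by
    intro x
    have : (Finset.univ.filter fun y => (pathsUnion r L).Adj x y).card ≤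
        (({(x.2 : ℕ) + 1, (x.2 : ℕ) - 1} : Finset ℕ)).card := by
      apply Finset.card_le_card_of_injOn (fun y => (y.2 : ℕ))
      · intro y hy
        simp only [Finset.mem_coe, Finset.mem_filter, Finset.mem_univ, true_and] at hy
        obtain ⟨-, h | h⟩ := hy <;> simp [Finset.mem_insert] <;> omega
      · intro y hy z hz hyz
        simp only [Finset.mem_coe, Finset.mem_filter, Finset.mem_univ, true_and] at hy hz
        obtain ⟨i, a⟩ := y
        obtain ⟨j, b⟩ := z
        obtain ⟨rfl, -⟩ := hy
        obtain ⟨rfl, -⟩ := hz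
        simp only at hyz
        exact congrArg _ (Fin.ext hyz)
    calc _ ≤ _ := this
      _ ≤ 2 := by
        refine le_trans (Finset.card_insert_le _ _) ?_
        simp
  intro v
  match v with
  | none => rw [hu]; norm_num
  | some x =>
    obtain ⟨x₀, -, hmin⟩ := Finset.exists_min_image Finset.univ (fun y => α (some y))
      ⟨x, Finset.mem_univ x⟩
    set m := α (some x₀) with hm
    have hminx : ∀ y, m ≤ α (some y) := fun y => hmin y (Finset.mem_univ y)
    have hpos : 0 < m := by
      by_contra hle
      push_neg at hle
      have hsum : ∑ y : Σ i, Fin (L i), (if (pathsUnion r L).Adj x₀ y then m else 0) ≤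
          ∑ y : Σ i, Fin (L i), (if (pathsUnion r L).Adj x₀ y then α (some y) else 0) := by
        apply Finset.sum_le_sum
        intro y _
        by_cases hA : (pathsUnion r L).Adj x₀ y
        · simpa [hA] using hminx y
        · simp [hA]
      have hsum2 : ∑ y : Σ i, Fin (L i), (if (pathsUnion r L).Adj x₀ y then m else 0)
          = ((Finset.univ.filter fun y => (pathsUnion r L).Adj x₀ y).card : ℝ) * m := by
        rw [← Finset.sum_filter, Finset.sum_const, nsmul_eq_mul]
      have hcard := card_le x₀
      have h2m : (2 : ℝ) * m ≤ ((Finset.univ.filter fun y => (pathsUnion r L).Adj x₀ y).card : ℝ) * m := by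
        apply mul_le_mul_of_nonpos_right _ hle
        exact_mod_cast hcard
      have hk := key x₀
      nlinarith [hminx x₀]
    exact lt_of_lt_of_le hpos (hminx x)
end

section
/- Let G = K_1 ∨ (P_{ℓ₁} ∪ ⋯ ∪ P_{ℓ_r}) be a graph on n vertices with eigenvalues λ₁ ≥ ⋯ ≥ λ_n. Then for every 2 ≤ i ≤ n−1, λ_i ∈ (−2, 2); i.e., λ₂ < 2 and λ_{n−1} > −2. -/
open SimpleGraph Matrix

open Finset in
open scoped InnerProductSpace in
private lemma spectral_pair {V : Type*} [Fintype V] [DecidableEq V]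
    (A : Matrix V V ℝ) (hA : A.IsHermitian) (j k : V) (hjk : j ≠ k) (v0 : V) :
    ∃ x : V → ℝ, x ≠ 0 ∧ x v0 = 0 ∧
      min (hA.eigenvalues j) (hA.eigenvalues k) * (∑ u, (x u)^2)
        ≤ ∑ u, ∑ v, A u v * x u * x v ∧
      ∑ u, ∑ v, A u v * x u * x v
        ≤ max (hA.eigenvalues j) (hA.eigenvalues k) * (∑ u, (x u)^2) := by
  classical
  set v : V → ℝ := ⇑(hA.eigenvectorBasis j) with hv
  set w : V → ℝ := ⇑(hA.eigenvectorBasis k) with hw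
  have hvv : ∑ u, v u * v u = 1 := by
    have := hA.eigenvectorBasis.orthonormal.1 j
    have h2 : ⟪hA.eigenvectorBasis j, hA.eigenvectorBasis j⟫_ℝ = 1 := by
      rw [real_inner_self_eq_norm_sq, this]; norm_num
    rw [PiLp.inner_apply] at h2
    simpa [hv, hw, pow_two] using h2
  have hww : ∑ u, w u * w u = 1 := by
    have := hA.eigenvectorBasis.orthonormal.1 k
    have h2 : ⟪hA.eigenvectorBasis k, hA.eigenvectorBasis k⟫_ℝ = 1 := by
      rw [real_inner_self_eq_norm_sq, this]; norm_num
    rw [PiLp.inner_apply] at h2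
    simpa [hv, hw, pow_two] using h2
  have hvw : ∑ u, v u * w u = 0 := by
    have := hA.eigenvectorBasis.orthonormal.2 hjk
    rw [hv, hw]
    simpa [PiLp.inner_apply, mul_comm] using this
  have hAv : A *ᵥ v = hA.eigenvalues j • v := hA.mulVec_eigenvectorBasis j
  have hAw : A *ᵥ w = hA.eigenvalues k • w := hA.mulVec_eigenvectorBasis k
  -- choose coefficients
  obtain ⟨a, b, hab, hx0⟩ : ∃ a b : ℝ, (a = 1 ∨ (a = 0 ∧ b = 1)) ∧ a * v v0 + b * w v0 = 0 := by
    by_cases hwv0 : w v0 = 0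
    · exact ⟨0, 1, Or.inr ⟨rfl, rfl⟩, by simp [hwv0]⟩
    · exact ⟨1, -(v v0)/(w v0), Or.inl rfl, by field_simp; ring⟩
  refine ⟨fun u => a * v u + b * w u, ?_, hx0, ?_, ?_⟩
  · intro hzero
    have happ : ∀ u, a * v u + b * w u = 0 := fun u => congrFun hzero u
    rcases hab with ha | ⟨ha, hb⟩
    · have : ∑ u, v u * (a * v u + b * w u) = 0 := by
        simp [happ]
      have : a = 0 := by
        have e : ∑ u, v u * (a * v u + b * w u)
            = a * ∑ u, v u * v u + b * ∑ u, v u * w u := by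
          rw [Finset.mul_sum, Finset.mul_sum, ← Finset.sum_add_distrib]
          exact Finset.sum_congr rfl fun u _ => by ring
        rw [e, hvv, hvw] at this; linarith
      rw [ha] at this; norm_num at this
    · subst ha hb
      have : ∑ u, w u * w u = 0 := by
        refine Finset.sum_eq_zero fun u _ => ?_
        have := happ u; simp at this; simp [this]
      rw [hww] at this; norm_num at this
  all_goals {
    have hq : ∑ u, ∑ x_1, A u x_1 * (a * v u + b * w u) * (a * v x_1 + b * w x_1)
        = a^2 * hA.eigenvalues j + b^2 * hA.eigenvalues k := by
      have expand : ∀ u, ∑ x_1, A u x_1 * (a * v u + b * w u) * (a * v x_1 + b * w x_1)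
          = (a * v u + b * w u) * (a * (hA.eigenvalues j * v u) + b * (hA.eigenvalues k * w u)) := by
        intro u
        have hv' : ∑ x_1, A u x_1 * v x_1 = hA.eigenvalues j * v u := by
          have := congrFun hAv u
          simpa [Matrix.mulVec, dotProduct] using this
        have hw' : ∑ x_1, A u x_1 * w x_1 = hA.eigenvalues k * w u := by
          have := congrFun hAw u
          simpa [Matrix.mulVec, dotProduct] using this
        calc ∑ x_1, A u x_1 * (a * v u + b * w u) * (a * v x_1 + b * w x_1)
            = (a * v u + b * w u) * (a * ∑ x_1, A u x_1 * v x_1 + b * ∑ x_1, A u x_1 * w x_1) := by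
              simp only [Finset.mul_sum, ← Finset.sum_add_distrib]
              exact Finset.sum_congr rfl fun z _ => by ring
          _ = (a * v u + b * w u) * (a * (hA.eigenvalues j * v u) + b * (hA.eigenvalues k * w u)) := by
              rw [hv', hw']
      rw [Finset.sum_congr rfl fun u _ => expand u]
      have : ∑ u, (a * v u + b * w u) * (a * (hA.eigenvalues j * v u) + b * (hA.eigenvalues k * w u))
          = a^2 * hA.eigenvalues j * (∑ u, v u * v u)
            + b^2 * hA.eigenvalues k * (∑ u, w u * w u)
            + (a * b * hA.eigenvalues j + a * b * hA.eigenvalues k) * (∑ u, v u * w u) := by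
        rw [Finset.mul_sum, Finset.mul_sum, Finset.mul_sum, ← Finset.sum_add_distrib,
          ← Finset.sum_add_distrib]
        exact Finset.sum_congr rfl fun u _ => by ring
      rw [this, hvv, hww, hvw]; ring
    have hnorm : ∑ u, (a * v u + b * w u)^2 = a^2 + b^2 := by
      have : ∑ u, (a * v u + b * w u)^2
          = a^2 * (∑ u, v u * v u) + b^2 * (∑ u, w u * w u) + 2*a*b * (∑ u, v u * w u) := by
        rw [Finset.mul_sum, Finset.mul_sum, Finset.mul_sum, ← Finset.sum_add_distrib,
          ← Finset.sum_add_distrib]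
        exact Finset.sum_congr rfl fun u _ => by ring
      rw [this, hvv, hww, hvw]; ring
    rw [hq, hnorm]
    have m1 : hA.eigenvalues j ⊓ hA.eigenvalues k ≤ hA.eigenvalues j := inf_le_left
    have m2 : hA.eigenvalues j ⊓ hA.eigenvalues k ≤ hA.eigenvalues k := inf_le_right
    have m3 : hA.eigenvalues j ≤ hA.eigenvalues j ⊔ hA.eigenvalues k := le_sup_left
    have m4 : hA.eigenvalues k ≤ hA.eigenvalues j ⊔ hA.eigenvalues k := le_sup_right
    nlinarith [mul_nonneg (sub_nonneg.2 m1) (sq_nonneg a), mul_nonneg (sub_nonneg.2 m2) (sq_nonneg b),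
      mul_nonneg (sub_nonneg.2 m3) (sq_nonneg a), mul_nonneg (sub_nonneg.2 m4) (sq_nonneg b)]
  }

open Finset

lemma adjMat_apply {V : Type*} (G : SimpleGraph V) (u v : V) [Decidable (G.Adj u v)] :
    adjMat G u v = if G.Adj u v then 1 else 0 := by
  by_cases h : G.Adj u v <;> simp [adjMat, h]

/-- zero extension of a `Fin m`-vector to `ℕ`. -/
def zext (m : ℕ) (x : Fin m → ℝ) : ℕ → ℝ := fun k => if h : k < m then x ⟨k, h⟩ else 0

lemma zext_coe {m : ℕ} (x : Fin m → ℝ) (a : Fin m) : zext m x (a : ℕ) = x a := by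
  simp [zext, a.isLt]

lemma zext_ge {m : ℕ} (x : Fin m → ℝ) {k : ℕ} (h : m ≤ k) : zext m x k = 0 := by
  simp [zext, Nat.not_lt.mpr h]

lemma sum_sq_zext (m : ℕ) (x : Fin m → ℝ) :
    ∑ a : Fin m, (x a)^2 = ∑ k ∈ range m, (zext m x k)^2 := by
  rw [← Fin.sum_univ_eq_sum_range (fun k => (zext m x k)^2) m]
  exact Finset.sum_congr rfl fun a _ => by rw [zext_coe]

lemma shrink (m : ℕ) (x : Fin m → ℝ) :
    ∑ k ∈ range m, zext m x k * zext m x (k+1)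
      = ∑ k ∈ range (m-1), zext m x k * zext m x (k+1) := by
  cases m with
  | zero => simp
  | succ n =>
    rw [Finset.sum_range_succ, zext_ge x (by omega : n+1 ≤ n+1)]
    simp

lemma path_Q (m : ℕ) (x : Fin m → ℝ) :
    ∑ a : Fin m, ∑ b : Fin m,
        (if (a:ℕ)+1 = (b:ℕ) ∨ (b:ℕ)+1 = (a:ℕ) then (1:ℝ) else 0) * x a * x b
    = 2 * ∑ k ∈ range (m-1), zext m x k * zext m x (k+1) := by
  set z := zext m x with hz
  have step1 : ∑ a : Fin m, ∑ b : Fin m,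
      (if (a:ℕ)+1 = (b:ℕ) ∨ (b:ℕ)+1 = (a:ℕ) then (1:ℝ) else 0) * x a * x b
      = ∑ k ∈ range m, ∑ l ∈ range m,
        (if k+1 = l ∨ l+1 = k then (1:ℝ) else 0) * z k * z l := by
    rw [← Fin.sum_univ_eq_sum_range
      (fun k => ∑ l ∈ range m, (if k+1 = l ∨ l+1 = k then (1:ℝ) else 0) * z k * z l) m]
    refine Finset.sum_congr rfl fun a _ => ?_
    rw [← Fin.sum_univ_eq_sum_range
      (fun l => (if (a:ℕ)+1 = l ∨ l+1 = (a:ℕ) then (1:ℝ) else 0) * z (a:ℕ) * z l) m]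
    refine Finset.sum_congr rfl fun b _ => ?_
    rw [hz, zext_coe, zext_coe]
  rw [step1]
  have split : ∀ k l : ℕ, (if k+1 = l ∨ l+1 = k then (1:ℝ) else 0) * z k * z l
      = (if l = k+1 then z k * z l else 0) + (if k = l+1 then z k * z l else 0) := by
    intro k l
    by_cases h1 : k+1 = l <;> by_cases h2 : l+1 = k
    · omega
    · rw [if_pos (Or.inl h1), if_pos h1.symm, if_neg (by omega : ¬ k = l+1)]; ring
    · rw [if_pos (Or.inr h2), if_neg (by omega), if_pos h2.symm]; ring
    · rw [if_neg (by tauto), if_neg (by omega), if_neg (by omega)]; ring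
  simp only [Finset.sum_congr rfl fun k _ => Finset.sum_congr rfl fun l _ => split k l]
  rw [Finset.sum_congr rfl fun k _ => Finset.sum_add_distrib, Finset.sum_add_distrib]
  have first : ∑ k ∈ range m, ∑ l ∈ range m, (if l = k+1 then z k * z l else 0)
      = ∑ k ∈ range m, z k * z (k+1) := by
    refine Finset.sum_congr rfl fun k _ => ?_
    rw [Finset.sum_ite_eq' (range m) (k+1) (fun l => z k * z l)]
    by_cases h : k+1 ∈ range m
    · rw [if_pos h]
    · have h0 : zext m x (k+1) = 0 := zext_ge x (by simpa using h)
      rw [if_neg h, hz, h0, mul_zero]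
  have second : ∑ k ∈ range m, ∑ l ∈ range m, (if k = l+1 then z k * z l else 0)
      = ∑ k ∈ range m, z k * z (k+1) := by
    rw [Finset.sum_comm]
    refine Finset.sum_congr rfl fun l _ => ?_
    rw [Finset.sum_ite_eq' (range m) (l+1) (fun k => z k * z l)]
    by_cases h : l+1 ∈ range m
    · rw [if_pos h, mul_comm]
    · have h0 : zext m x (l+1) = 0 := zext_ge x (by simpa using h)
      rw [if_neg h, hz, h0, mul_zero]
  rw [first, second, shrink]
  ring

lemma sig_sum_sq (r : ℕ) (L : Fin r → ℕ) (y : (Σ i, Fin (L i)) → ℝ) :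
    ∑ u, (y u)^2 = ∑ i, ∑ k ∈ range (L i), (zext (L i) (fun a => y ⟨i, a⟩) k)^2 := by
  rw [← Finset.univ_sigma_univ, Finset.sum_sigma]
  exact Finset.sum_congr rfl fun i _ => sum_sq_zext _ _

lemma sig_Q (r : ℕ) (L : Fin r → ℕ) (y : (Σ i, Fin (L i)) → ℝ) :
    ∑ u, ∑ v, adjMat (pathsUnion r L) u v * y u * y v
    = ∑ i, 2 * ∑ k ∈ range (L i - 1),
        zext (L i) (fun a => y ⟨i, a⟩) k * zext (L i) (fun a => y ⟨i, a⟩) (k+1) := by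
  classical
  have hM : ∀ u v : (Σ i, Fin (L i)), adjMat (pathsUnion r L) u v
      = if u.1 = v.1 ∧ ((u.2:ℕ)+1 = (v.2:ℕ) ∨ (v.2:ℕ)+1 = (u.2:ℕ)) then 1 else 0 := by
    intro u v
    rw [adjMat_apply]
    exact if_congr Iff.rfl rfl rfl
  calc ∑ u, ∑ v, adjMat (pathsUnion r L) u v * y u * y v
      = ∑ i, ∑ a : Fin (L i), ∑ v : (Σ i, Fin (L i)),
          adjMat (pathsUnion r L) ⟨i,a⟩ v * y ⟨i,a⟩ * y v := by
        rw [← Finset.univ_sigma_univ, Finset.sum_sigma]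
    _ = ∑ i, ∑ a : Fin (L i), ∑ j, ∑ b : Fin (L j),
          adjMat (pathsUnion r L) ⟨i,a⟩ ⟨j,b⟩ * y ⟨i,a⟩ * y ⟨j,b⟩ := by
        refine Finset.sum_congr rfl fun i _ => Finset.sum_congr rfl fun a _ => ?_
        rw [← Finset.univ_sigma_univ, Finset.sum_sigma]
    _ = ∑ i, ∑ a : Fin (L i), ∑ b : Fin (L i),
          (if (a:ℕ)+1 = (b:ℕ) ∨ (b:ℕ)+1 = (a:ℕ) then (1:ℝ) else 0) * y ⟨i,a⟩ * y ⟨i,b⟩ := by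
        refine Finset.sum_congr rfl fun i _ => Finset.sum_congr rfl fun a _ => ?_
        rw [Finset.sum_eq_single i]
        · refine Finset.sum_congr rfl fun b _ => ?_
          rw [hM]
          have hiff : ((⟨i,a⟩ : Σ i, Fin (L i)).1 = (⟨i,b⟩ : Σ i, Fin (L i)).1 ∧
              (((⟨i,a⟩ : Σ i, Fin (L i)).2:ℕ)+1 = ((⟨i,b⟩ : Σ i, Fin (L i)).2:ℕ) ∨
               ((⟨i,b⟩ : Σ i, Fin (L i)).2:ℕ)+1 = ((⟨i,a⟩ : Σ i, Fin (L i)).2:ℕ)))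
              ↔ ((a:ℕ)+1 = (b:ℕ) ∨ (b:ℕ)+1 = (a:ℕ)) := by
            constructor
            · rintro ⟨-, h⟩; exact h
            · intro h; exact ⟨rfl, h⟩
          rw [if_congr hiff rfl rfl]
        · intro j _ hj
          refine Finset.sum_eq_zero fun b _ => ?_
          rw [hM]
          have hne : ¬ ((⟨i,a⟩ : Σ i, Fin (L i)).1 = (⟨j,b⟩ : Σ i, Fin (L i)).1 ∧
              (((⟨i,a⟩ : Σ i, Fin (L i)).2:ℕ)+1 = ((⟨j,b⟩ : Σ i, Fin (L i)).2:ℕ) ∨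
               ((⟨j,b⟩ : Σ i, Fin (L i)).2:ℕ)+1 = ((⟨i,a⟩ : Σ i, Fin (L i)).2:ℕ))) := by
            rintro ⟨h1, -⟩
            exact hj (h1.symm)
          rw [if_neg hne]
          ring
        · intro h; exact absurd (Finset.mem_univ i) h
    _ = ∑ i, 2 * ∑ k ∈ range (L i - 1),
          zext (L i) (fun a => y ⟨i, a⟩) k * zext (L i) (fun a => y ⟨i, a⟩) (k+1) :=
        Finset.sum_congr rfl fun i _ => path_Q (L i) (fun a => y ⟨i, a⟩)

lemma nat_path (x : ℕ → ℝ) : ∀ m : ℕ,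
    (x m)^2 ≤ 2*∑ k ∈ range (m+1), (x k)^2 - 2*∑ k ∈ range m, x k * x (k+1)
    ∧ ((∃ k ≤ m, x k ≠ 0) →
      0 < 2*∑ k ∈ range (m+1), (x k)^2 - 2*∑ k ∈ range m, x k * x (k+1)) := by
  intro m
  induction m with
  | zero =>
    constructor
    · norm_num [Finset.sum_range_succ]
      nlinarith [sq_nonneg (x 0)]
    · rintro ⟨k, hk, hne⟩
      have hk0 : k = 0 := Nat.le_zero.mp hk
      subst hk0
      have : 0 < (x 0)^2 := by positivity
      norm_num [Finset.sum_range_succ]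
      nlinarith
  | succ m ih =>
    obtain ⟨ih1, ih2⟩ := ih
    have e1 : ∑ k ∈ range (m+2), (x k)^2 = ∑ k ∈ range (m+1), (x k)^2 + (x (m+1))^2 := by
      rw [Finset.sum_range_succ]
    have e2 : ∑ k ∈ range (m+1), x k * x (k+1)
        = ∑ k ∈ range m, x k * x (k+1) + x m * x (m+1) := by
      rw [Finset.sum_range_succ]
    rw [e1, e2]
    constructor
    · nlinarith [sq_nonneg (x m - x (m+1))]
    · rintro ⟨k, hk, hne⟩
      by_cases hk' : k ≤ m
      · have h2 := ih2 ⟨k, hk', hne⟩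
        by_cases hb : x (m+1) = 0
        · rw [hb]; nlinarith
        · have : 0 < (x (m+1))^2 := by positivity
          nlinarith [sq_nonneg (x m - x (m+1))]
      · have : k = m + 1 := by omega
        subst this
        have : 0 < (x (m+1))^2 := by positivity
        nlinarith [sq_nonneg (x m - x (m+1))]

lemma range_bound (m : ℕ) (z : ℕ → ℝ) :
    (0 ≤ 2*∑ k ∈ range m, (z k)^2 - 2*∑ k ∈ range (m-1), z k * z (k+1))
    ∧ ((∃ k < m, z k ≠ 0) →
      0 < 2*∑ k ∈ range m, (z k)^2 - 2*∑ k ∈ range (m-1), z k * z (k+1)) := by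
  cases m with
  | zero => simp
  | succ p =>
    obtain ⟨h1, h2⟩ := nat_path z p
    have hr : (p + 1) - 1 = p := by omega
    rw [hr]
    refine ⟨le_trans (sq_nonneg (z p)) h1, fun ⟨k, hk, hne⟩ => h2 ⟨k, by omega, hne⟩⟩

lemma range_bound_neg (m : ℕ) (z : ℕ → ℝ) :
    (0 ≤ 2*∑ k ∈ range m, (z k)^2 + 2*∑ k ∈ range (m-1), z k * z (k+1))
    ∧ ((∃ k < m, z k ≠ 0) →
      0 < 2*∑ k ∈ range m, (z k)^2 + 2*∑ k ∈ range (m-1), z k * z (k+1)) := by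
  obtain ⟨h1, h2⟩ := range_bound m (fun k => (-1)^k * z k)
  have e1 : ∑ k ∈ range m, ((-1:ℝ)^k * z k)^2 = ∑ k ∈ range m, (z k)^2 := by
    refine Finset.sum_congr rfl fun k _ => ?_
    have : ((-1:ℝ)^k)^2 = 1 := by rw [← pow_mul, mul_comm, pow_mul]; norm_num
    rw [mul_pow, this, one_mul]
  have e2 : ∑ k ∈ range (m-1), ((-1:ℝ)^k * z k) * ((-1)^(k+1) * z (k+1))
      = - ∑ k ∈ range (m-1), z k * z (k+1) := by
    rw [← Finset.sum_neg_distrib]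
    refine Finset.sum_congr rfl fun k _ => ?_
    have h3 : ((-1:ℝ)^k) * (-1)^(k+1) = -1 := by
      rw [pow_succ, ← mul_assoc, ← pow_add, ← two_mul, pow_mul]; norm_num
    have h4 : (-1:ℝ)^k * z k * ((-1)^(k+1) * z (k+1))
        = ((-1:ℝ)^k * (-1)^(k+1)) * (z k * z (k+1)) := by ring
    rw [h4, h3]; ring
  rw [e1, e2] at h1 h2
  constructor
  · linarith
  · rintro ⟨k, hk, hne⟩
    have hzk : ((-1:ℝ)^k * z k) ≠ 0 :=
      mul_ne_zero (pow_ne_zero _ (by norm_num)) hne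
    have := h2 ⟨k, hk, hzk⟩
    linarith

lemma sig_bound (r : ℕ) (L : Fin r → ℕ) (y : (Σ i, Fin (L i)) → ℝ) (hy : y ≠ 0) :
    0 < 2 * (∑ u, (y u)^2) - ∑ u, ∑ v, adjMat (pathsUnion r L) u v * y u * y v
    ∧ 0 < 2 * (∑ u, (y u)^2) + ∑ u, ∑ v, adjMat (pathsUnion r L) u v * y u * y v := by
  rw [sig_Q, sig_sum_sq]
  obtain ⟨u0, hu0⟩ : ∃ u, y u ≠ 0 := by
    by_contra hc; push_neg at hc; exact hy (funext fun u => hc u)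
  obtain ⟨i0, a0⟩ := u0
  have hz0 : ∃ k < L i0, zext (L i0) (fun a => y ⟨i0, a⟩) k ≠ 0 :=
    ⟨(a0 : ℕ), a0.isLt, by rw [zext_coe]; exact hu0⟩
  constructor
  · have hsplit : 2 * (∑ i, ∑ k ∈ range (L i), (zext (L i) (fun a => y ⟨i,a⟩) k)^2)
        - ∑ i, 2 * ∑ k ∈ range (L i - 1),
            zext (L i) (fun a => y ⟨i,a⟩) k * zext (L i) (fun a => y ⟨i,a⟩) (k+1)
        = ∑ i, (2 * ∑ k ∈ range (L i), (zext (L i) (fun a => y ⟨i,a⟩) k)^2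
            - 2 * ∑ k ∈ range (L i - 1),
              zext (L i) (fun a => y ⟨i,a⟩) k * zext (L i) (fun a => y ⟨i,a⟩) (k+1)) := by
      rw [Finset.mul_sum, ← Finset.sum_sub_distrib]
    rw [hsplit]
    refine Finset.sum_pos' (fun i _ => (range_bound (L i) _).1)
      ⟨i0, Finset.mem_univ i0, (range_bound (L i0) _).2 hz0⟩
  · have hsplit : 2 * (∑ i, ∑ k ∈ range (L i), (zext (L i) (fun a => y ⟨i,a⟩) k)^2)
        + ∑ i, 2 * ∑ k ∈ range (L i - 1),
            zext (L i) (fun a => y ⟨i,a⟩) k * zext (L i) (fun a => y ⟨i,a⟩) (k+1)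
        = ∑ i, (2 * ∑ k ∈ range (L i), (zext (L i) (fun a => y ⟨i,a⟩) k)^2
            + 2 * ∑ k ∈ range (L i - 1),
              zext (L i) (fun a => y ⟨i,a⟩) k * zext (L i) (fun a => y ⟨i,a⟩) (k+1)) := by
      rw [Finset.mul_sum, ← Finset.sum_add_distrib]
    rw [hsplit]
    refine Finset.sum_pos' (fun i _ => (range_bound_neg (L i) _).1)
      ⟨i0, Finset.mem_univ i0, (range_bound_neg (L i0) _).2 hz0⟩

lemma adjMat_cone_some {V : Type*} (F : SimpleGraph V) (a b : V) :
    adjMat (cone F) (some a) (some b) = adjMat F a b := by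
  classical
  rw [adjMat_apply, adjMat_apply]
  exact if_congr Iff.rfl rfl rfl

theorem stmt_3 (r : ℕ) (L : Fin r → ℕ) (n : ℕ)
    (hn : Fintype.card (Option (Σ i, Fin (L i))) = n)
    (he : (adjMat (cone (pathsUnion r L))).IsHermitian)
    (μ : Fin n → ℝ) (hmono : Antitone μ)
    (hperm : ∃ e : Fin n ≃ Option (Σ i, Fin (L i)), ∀ i, μ i = he.eigenvalues (e i)) :
    ∀ i : Fin n, 0 < (i : ℕ) → (i : ℕ) < n - 1 → -2 < μ i ∧ μ i < 2 := by
  classical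
  obtain ⟨e, hμ⟩ := hperm
  intro i hi0 hin
  have hn3 : 3 ≤ n := by omega
  have key2 : μ ⟨1, by omega⟩ < 2 := by
    by_contra hcon
    push_neg at hcon
    have h0 : (2:ℝ) ≤ μ ⟨0, by omega⟩ :=
      le_trans hcon (hmono (Fin.mk_le_mk.mpr (by omega)))
    have hjk : e ⟨0, by omega⟩ ≠ e ⟨1, by omega⟩ := by
      intro h
      have h2 := e.injective h
      rw [Fin.mk.injEq] at h2
      omega
    obtain ⟨x, hx0, hxnone, hlow, hup⟩ :=
      spectral_pair (adjMat (cone (pathsUnion r L))) he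
        (e ⟨0, by omega⟩) (e ⟨1, by omega⟩) hjk none
    set y : (Σ i, Fin (L i)) → ℝ := fun s => x (some s) with hy
    have hy0 : y ≠ 0 := by
      intro h
      apply hx0
      funext u
      cases u with
      | none => exact hxnone
      | some s => exact congrFun h s
    have hsum : ∑ u, (x u)^2 = ∑ s, (y s)^2 := by
      rw [Fintype.sum_option (fun u => (x u)^2), hxnone]
      norm_num
      rfl
    have hQ : ∑ u, ∑ v, adjMat (cone (pathsUnion r L)) u v * x u * x v
        = ∑ s, ∑ t, adjMat (pathsUnion r L) s t * y s * y t := by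
      rw [Fintype.sum_option]
      have hnone : ∑ v, adjMat (cone (pathsUnion r L)) none v * x none * x v = 0 :=
        Finset.sum_eq_zero fun v _ => by rw [hxnone]; ring
      rw [hnone, zero_add]
      refine Finset.sum_congr rfl fun s _ => ?_
      rw [Fintype.sum_option]
      have h1 : adjMat (cone (pathsUnion r L)) (some s) none * x (some s) * x none = 0 := by
        rw [hxnone]; ring
      rw [h1, zero_add]
      exact Finset.sum_congr rfl fun t _ => by rw [adjMat_cone_some]
    have hmin2 : (2:ℝ) ≤ min (he.eigenvalues (e ⟨0, by omega⟩))
        (he.eigenvalues (e ⟨1, by omega⟩)) := by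
      rw [← hμ ⟨0, by omega⟩, ← hμ ⟨1, by omega⟩]
      exact le_min h0 hcon
    have hS : (0:ℝ) ≤ ∑ u, (x u)^2 := Finset.sum_nonneg fun u _ => sq_nonneg _
    have hchain : 2 * (∑ u, (x u)^2)
        ≤ ∑ u, ∑ v, adjMat (cone (pathsUnion r L)) u v * x u * x v :=
      le_trans (mul_le_mul_of_nonneg_right hmin2 hS) hlow
    have hB := (sig_bound r L y hy0).1
    rw [hQ, hsum] at hchain
    linarith
  have key3 : -2 < μ ⟨n-2, by omega⟩ := by
    by_contra hcon
    push_neg at hcon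
    have h0 : μ ⟨n-1, by omega⟩ ≤ -2 :=
      le_trans (hmono (Fin.mk_le_mk.mpr (by omega))) hcon
    have hjk : e ⟨n-2, by omega⟩ ≠ e ⟨n-1, by omega⟩ := by
      intro h
      have h2 := e.injective h
      rw [Fin.mk.injEq] at h2
      omega
    obtain ⟨x, hx0, hxnone, hlow, hup⟩ :=
      spectral_pair (adjMat (cone (pathsUnion r L))) he
        (e ⟨n-2, by omega⟩) (e ⟨n-1, by omega⟩) hjk none
    set y : (Σ i, Fin (L i)) → ℝ := fun s => x (some s) with hy
    have hy0 : y ≠ 0 := by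
      intro h
      apply hx0
      funext u
      cases u with
      | none => exact hxnone
      | some s => exact congrFun h s
    have hsum : ∑ u, (x u)^2 = ∑ s, (y s)^2 := by
      rw [Fintype.sum_option (fun u => (x u)^2), hxnone]
      norm_num
      rfl
    have hQ : ∑ u, ∑ v, adjMat (cone (pathsUnion r L)) u v * x u * x v
        = ∑ s, ∑ t, adjMat (pathsUnion r L) s t * y s * y t := by
      rw [Fintype.sum_option]
      have hnone : ∑ v, adjMat (cone (pathsUnion r L)) none v * x none * x v = 0 :=
        Finset.sum_eq_zero fun v _ => by rw [hxnone]; ring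
      rw [hnone, zero_add]
      refine Finset.sum_congr rfl fun s _ => ?_
      rw [Fintype.sum_option]
      have h1 : adjMat (cone (pathsUnion r L)) (some s) none * x (some s) * x none = 0 := by
        rw [hxnone]; ring
      rw [h1, zero_add]
      exact Finset.sum_congr rfl fun t _ => by rw [adjMat_cone_some]
    have hmax : max (he.eigenvalues (e ⟨n-2, by omega⟩))
        (he.eigenvalues (e ⟨n-1, by omega⟩)) ≤ -2 := by
      rw [← hμ ⟨n-2, by omega⟩, ← hμ ⟨n-1, by omega⟩]
      exact max_le hcon h0
    have hS : (0:ℝ) ≤ ∑ u, (x u)^2 := Finset.sum_nonneg fun u _ => sq_nonneg _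
    have hchain : (∑ u, ∑ v, adjMat (cone (pathsUnion r L)) u v * x u * x v)
        ≤ -2 * (∑ u, (x u)^2) :=
      le_trans hup (mul_le_mul_of_nonneg_right hmax hS)
    have hB := (sig_bound r L y hy0).2
    rw [hQ, hsum] at hchain
    linarith
  constructor
  · have h := hmono (Fin.mk_le_mk.mpr (by omega) : i ≤ ⟨n-2, by omega⟩)
    linarith
  · have h := hmono (Fin.mk_le_mk.mpr (by omega) : (⟨1, by omega⟩ : Fin n) ≤ i)
    linarith
end
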